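/- Let G be a finite connected simple graph with maximum degree Δ(G) ≥ 2 and order n(G). Then the zero forcing number satisfies Z(G) = F_1(G) ≤ ((Δ(G) − 2)·n(G) + 2) / (Δ(G) − 1). -/
import Mathlib


/-- One step of the `k`-forcing color change process: a colored vertex (in `S`)
with at most `k` non-colored neighbors causes all of its neighbors to become colored. -/
def kStep {V : Type*} [Fintype V] [DecidableEq V] (G : SimpleGraph V) [DecidableRel G.Adj]
    (k : ℕ) (S : Finset V) : Finset V :=
  S ∪ Finset.univ.filter (fun v => ∃ u ∈ S, G.Adj u v ∧ (G.neighborFinset u \ S).card ≤ k)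

/-- `S` is a `k`-forcing set if iterating the color change rule starting from `S`
eventually colors all vertices of `G`. -/
def IsKForcingSet {V : Type*} [Fintype V] [DecidableEq V] (G : SimpleGraph V)
    [DecidableRel G.Adj] (k : ℕ) (S : Finset V) : Prop :=
  ∃ n : ℕ, (kStep G k)^[n] S = Finset.univ

/-- The `k`-forcing number `F_k(G)`: the minimum cardinality of a `k`-forcing set. -/
noncomputable def kForcingNumber {V : Type*} [Fintype V] [DecidableEq V] (G : SimpleGraph V)
    [DecidableRel G.Adj] (k : ℕ) : ℕ :=
  sInf {m | ∃ S : Finset V, S.card = m ∧ IsKForcingSet G k S}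

/-- The zero forcing number `Z(G) = F_1(G)`. -/
noncomputable def zeroForcingNumber {V : Type*} [Fintype V] [DecidableEq V]
    (G : SimpleGraph V) [DecidableRel G.Adj] : ℕ :=
  kForcingNumber G 1

section Aux

set_option linter.unusedSectionVars false

variable {V : Type*} [Fintype V] [DecidableEq V] (G : SimpleGraph V) [DecidableRel G.Adj]

lemma kStep_mono (k : ℕ) {S T : Finset V} (h : S ⊆ T) : kStep G k S ⊆ kStep G k T := by
  intro v hv
  rcases Finset.mem_union.1 hv with hv | hv
  · exact Finset.mem_union_left _ (h hv)
  · rcases Finset.mem_filter.1 hv with ⟨-, u, hu, hadj, hcard⟩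
    refine Finset.mem_union_right _ (Finset.mem_filter.2 ⟨Finset.mem_univ _, u, h hu, hadj, ?_⟩)
    exact le_trans (Finset.card_le_card (Finset.sdiff_subset_sdiff (le_refl _) h)) hcard

lemma subset_kStep (k : ℕ) (S : Finset V) : S ⊆ kStep G k S := Finset.subset_union_left

lemma kStep_iterate_mono (k n : ℕ) {S T : Finset V} (h : S ⊆ T) :
    (kStep G k)^[n] S ⊆ (kStep G k)^[n] T := by
  induction n generalizing S T with
  | zero => exact h
  | succ n ih => rw [Function.iterate_succ_apply, Function.iterate_succ_apply]
                 exact ih (kStep_mono G k h)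

lemma isKForcingSet_of_step {k : ℕ} {S T : Finset V} (hST : T ⊆ kStep G k S)
    (hT : IsKForcingSet G k T) : IsKForcingSet G k S := by
  obtain ⟨n, hn⟩ := hT
  refine ⟨n + 1, ?_⟩
  rw [Function.iterate_succ_apply]
  exact Finset.univ_subset_iff.1 (hn ▸ kStep_iterate_mono G k n hST)

lemma walk_cross {C : Finset V} : ∀ {x y : V}, G.Walk x y → x ∈ C → y ∉ C →
    ∃ u ∈ C, ∃ w, w ∉ C ∧ G.Adj u w := by
  intro x y p
  induction p with
  | nil => intro h h'; exact absurd h h'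
  | @cons a b c h p ih =>
    intro ha hc
    by_cases hb : b ∈ C
    · exact ih hb hc
    · exact ⟨a, ha, b, hb, h⟩

lemma exists_cross {C : Finset V} (hconn : G.Connected) (hx : C.Nonempty)
    (hy : ∃ w, w ∉ C) : ∃ u ∈ C, ∃ w, w ∉ C ∧ G.Adj u w := by
  obtain ⟨x, hx⟩ := hx
  obtain ⟨y, hy⟩ := hy
  exact walk_cross G ((hconn x y).some) hx hy

lemma key (d : ℕ) (hdeg : ∀ v : V, G.degree v ≤ d + 2) (hconn : G.Connected) :
    ∀ m (C : Finset V), Cᶜ.card = m → C.Nonempty → (∀ v ∈ C, ∃ u ∈ C, G.Adj u v) →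
    ∃ S : Finset V, C ⊆ S ∧ IsKForcingSet G 1 S ∧
      (d + 1) * S.card ≤ d * Cᶜ.card + (d + 1) * C.card := by
  intro m
  induction m using Nat.strong_induction_on with
  | _ m ih =>
  intro C hm hCne hJ
  by_cases hfull : C = Finset.univ
  · exact ⟨C, subset_rfl, ⟨0, hfull⟩, by nlinarith⟩
  · have hcompl : ∃ w, w ∉ C := by
      by_contra h
      push_neg at h
      exact hfull (Finset.eq_univ_iff_forall.2 h)
    obtain ⟨u, hu, w, hw, hadj⟩ := exists_cross G hconn hCne hcompl
    set U : Finset V := G.neighborFinset u \ C with hU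
    have hwU : w ∈ U := Finset.mem_sdiff.2 ⟨(G.mem_neighborFinset u w).2 hadj, hw⟩
    have hUne : U.Nonempty := ⟨w, hwU⟩
    -- |U| ≤ d + 1
    obtain ⟨u', hu'C, hu'adj⟩ := hJ u hu
    have hu'N : u' ∈ G.neighborFinset u := (G.mem_neighborFinset u u').2 hu'adj.symm
    have hu'U : u' ∉ U := fun h => (Finset.mem_sdiff.1 h).2 hu'C
    have hUcard : U.card ≤ d + 1 := by
      have h1 : insert u' U ⊆ G.neighborFinset u := by
        intro x hx
        rcases Finset.mem_insert.1 hx with rfl | hx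
        · exact hu'N
        · exact (Finset.mem_sdiff.1 hx).1
      have h2 := Finset.card_le_card h1
      rw [Finset.card_insert_of_notMem hu'U, G.card_neighborFinset_eq_degree] at h2
      have := hdeg u
      omega
    set C'' : Finset V := C ∪ U with hC''
    have hdisj : Disjoint C U := Finset.disjoint_left.2 fun x hx hx' =>
      (Finset.mem_sdiff.1 hx').2 hx
    have hC''card : C''.card = C.card + U.card := Finset.card_union_of_disjoint hdisj
    have hUm : U.card ≤ m := by
      rw [← hm]
      exact Finset.card_le_card fun x hx => Finset.mem_compl.2 (Finset.mem_sdiff.1 hx).2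
    have hC''compl : C''ᶜ.card = m - U.card := by
      have h1 : Cᶜ.card = Fintype.card V - C.card := Finset.card_compl C
      have h2 : C''ᶜ.card = Fintype.card V - C''.card := Finset.card_compl C''
      have h3 : C.card ≤ Fintype.card V := Finset.card_le_univ C
      have h4 : C''.card ≤ Fintype.card V := Finset.card_le_univ C''
      omega
    have hlt : m - U.card < m := by
      have : 1 ≤ U.card := Finset.card_pos.2 hUne
      have : 1 ≤ m := le_trans this hUm
      omega
    have hJ'' : ∀ v ∈ C'', ∃ x ∈ C'', G.Adj x v := by
      intro v hv
      rcases Finset.mem_union.1 hv with hv | hv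
      · obtain ⟨x, hx, hxadj⟩ := hJ v hv
        exact ⟨x, Finset.mem_union_left _ hx, hxadj⟩
      · exact ⟨u, Finset.mem_union_left _ hu,
          (G.mem_neighborFinset u v).1 (Finset.mem_sdiff.1 hv).1⟩
    obtain ⟨S'', hsub, hforce, hineq⟩ := ih (m - U.card) hlt C'' hC''compl
      (hCne.mono Finset.subset_union_left) hJ''
    set S : Finset V := S''.erase w with hS
    have hwS'' : w ∈ S'' := hsub (Finset.mem_union_right _ hwU)
    have hScard : S''.card = S.card + 1 := by
      rw [hS, Finset.card_erase_of_mem hwS'']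
      have : 1 ≤ S''.card := Finset.card_pos.2 ⟨w, hwS''⟩
      omega
    have hCS : C ⊆ S := fun x hx => Finset.mem_erase.2
      ⟨fun h => hw (h ▸ hx), hsub (Finset.mem_union_left _ hx)⟩
    have hstep : S'' ⊆ kStep G 1 S := by
      have hwk : w ∈ kStep G 1 S := by
        refine Finset.mem_union_right _ (Finset.mem_filter.2 ⟨Finset.mem_univ _, u, hCS hu,
          hadj, ?_⟩)
        have hsub1 : G.neighborFinset u \ S ⊆ {w} := by
          intro x hx
          obtain ⟨hx1, hx2⟩ := Finset.mem_sdiff.1 hx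
          by_contra hxw
          rw [Finset.mem_singleton] at hxw
          have hxC : x ∉ C := fun h => hx2 (hCS h)
          have hxU : x ∈ U := Finset.mem_sdiff.2 ⟨hx1, hxC⟩
          exact hx2 (Finset.mem_erase.2 ⟨hxw, hsub (Finset.mem_union_right _ hxU)⟩)
        calc (G.neighborFinset u \ S).card ≤ ({w} : Finset V).card :=
              Finset.card_le_card hsub1
          _ = 1 := Finset.card_singleton w
      intro x hx
      by_cases hxw : x = w
      · exact hxw ▸ hwk
      · exact subset_kStep G 1 S (Finset.mem_erase.2 ⟨hxw, hx⟩)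
    refine ⟨S, hCS, isKForcingSet_of_step G hstep hforce, ?_⟩
    rw [hm]
    rw [hC''compl, hC''card, hScard] at hineq
    have hq1 : 1 ≤ U.card := Finset.card_pos.2 hUne
    zify [hUm] at hineq ⊢
    nlinarith [hineq, hUcard, hq1]

end Aux

/-- If `G` is connected with `Δ(G) ≥ 2`, then `Z(G) = F_1(G) ≤ ((Δ-2)n + 2) / (Δ-1)`. -/
theorem zeroForcingNumber_le_simplified {V : Type*} [Fintype V] [DecidableEq V]
    (G : SimpleGraph V) [DecidableRel G.Adj]
    (hconn : G.Connected) (hΔ : 2 ≤ G.maxDegree) :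
    zeroForcingNumber G = kForcingNumber G 1 ∧
    (zeroForcingNumber G : ℝ) ≤
      (((G.maxDegree : ℝ) - 2) * (Fintype.card V) + 2) / ((G.maxDegree : ℝ) - 1) := by
  refine ⟨rfl, ?_⟩
  have hne : Nonempty V := hconn.nonempty
  obtain ⟨u₁, hu₁⟩ := G.exists_maximal_degree_vertex
  set Δ := G.maxDegree with hΔdef
  set d := Δ - 2 with hddef
  have hd : Δ = d + 2 := by omega
  have hdeg : ∀ v : V, G.degree v ≤ d + 2 := fun v => hd ▸ G.degree_le_maxDegree v
  set N : Finset V := G.neighborFinset u₁ with hN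
  have hNcard : N.card = Δ := by rw [hN, G.card_neighborFinset_eq_degree, hu₁]
  have hNne : N.Nonempty := Finset.card_pos.1 (by omega)
  obtain ⟨w₀, hw₀⟩ := hNne
  have hu₁N : u₁ ∉ N := by
    rw [hN]; exact G.notMem_neighborFinset_self _
  set C₁ : Finset V := insert u₁ N with hC₁
  have hC₁card : C₁.card = Δ + 1 := by
    rw [hC₁, Finset.card_insert_of_notMem hu₁N, hNcard]
  have hJ : ∀ v ∈ C₁, ∃ x ∈ C₁, G.Adj x v := by
    intro v hv
    rcases Finset.mem_insert.1 hv with h | hv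
    · exact ⟨w₀, Finset.mem_insert_of_mem hw₀,
        h ▸ ((G.mem_neighborFinset _ w₀).1 hw₀).symm⟩
    · exact ⟨u₁, Finset.mem_insert_self _ _, (G.mem_neighborFinset u₁ v).1 hv⟩
  obtain ⟨S'', hsub, hforce, hineq⟩ := key G d hdeg hconn C₁ᶜ.card C₁ rfl
    ⟨u₁, Finset.mem_insert_self _ _⟩ hJ
  set S : Finset V := S''.erase w₀ with hS
  have hw₀S'' : w₀ ∈ S'' := hsub (Finset.mem_insert_of_mem hw₀)
  have hScard : S''.card = S.card + 1 := by
    rw [hS, Finset.card_erase_of_mem hw₀S'']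
    have : 1 ≤ S''.card := Finset.card_pos.2 ⟨w₀, hw₀S''⟩
    omega
  have hu₁S : u₁ ∈ S := Finset.mem_erase.2
    ⟨fun h => hu₁N (h ▸ hw₀), hsub (Finset.mem_insert_self _ _)⟩
  have hstep : S'' ⊆ kStep G 1 S := by
    have hwk : w₀ ∈ kStep G 1 S := by
      refine Finset.mem_union_right _ (Finset.mem_filter.2 ⟨Finset.mem_univ _, u₁, hu₁S,
        (G.mem_neighborFinset u₁ w₀).1 hw₀, ?_⟩)
      have hsub1 : G.neighborFinset u₁ \ S ⊆ {w₀} := by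
        intro x hx
        obtain ⟨hx1, hx2⟩ := Finset.mem_sdiff.1 hx
        by_contra hxw
        rw [Finset.mem_singleton] at hxw
        exact hx2 (Finset.mem_erase.2 ⟨hxw, hsub (Finset.mem_insert_of_mem hx1)⟩)
      calc (G.neighborFinset u₁ \ S).card ≤ ({w₀} : Finset V).card :=
            Finset.card_le_card hsub1
        _ = 1 := Finset.card_singleton w₀
    intro x hx
    by_cases hxw : x = w₀
    · exact hxw ▸ hwk
    · exact subset_kStep G 1 S (Finset.mem_erase.2 ⟨hxw, hx⟩)
  have hforceS : IsKForcingSet G 1 S := isKForcingSet_of_step G hstep hforce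
  have hZle : zeroForcingNumber G ≤ S.card :=
    Nat.sInf_le ⟨S, rfl, hforceS⟩
  -- the natural-number inequality
  set n := Fintype.card V with hn
  have hC₁n : Δ + 1 ≤ n := hC₁card ▸ Finset.card_le_univ C₁
  have hC₁compl : C₁ᶜ.card = n - (Δ + 1) := by
    rw [Finset.card_compl, hC₁card]
  have hkey : (d + 1) * S.card ≤ d * n + 2 := by
    rw [hC₁compl, hC₁card, hScard] at hineq
    zify [hC₁n] at hineq ⊢
    nlinarith [hineq]
  have hnat : (d + 1) * zeroForcingNumber G ≤ d * n + 2 :=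
    le_trans (Nat.mul_le_mul_left _ hZle) hkey
  -- conclude over ℝ
  have hΔR : (Δ : ℝ) = (d : ℝ) + 2 := by exact_mod_cast hd
  have hR : ((d : ℝ) + 1) * (zeroForcingNumber G : ℝ) ≤ (d : ℝ) * (n : ℝ) + 2 := by
    exact_mod_cast hnat
  rw [hΔR, le_div_iff₀ (by linarith [Nat.cast_nonneg (α := ℝ) d] : (0:ℝ) < (d:ℝ) + 2 - 1)]
  nlinarith [hR]
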